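/- Let p and q be distinct primes and let n be a positive integer divisible by both p and q. Let t be the q-adic valuation of n, let a = (n / q^t) mod q, and set A = a·q^t (the lowest nonzero term of the base-q expansion of n). Let s be the p-adic valuation of n, let b = (n / p^s) mod p, and set B = b·p^s (the lowest nonzero term of the base-p expansion of n). If A < B, then q divides the binomial coefficient C(n − 1, A) and p does not divide C(n − 1, A). -/

import Mathlib

private lemma aux_mod_sub_mod {d k m : ℕ} (hk : k ≤ m) (h : k % d ≤ m % d) :
    (m - k) % d = m % d - k % d := by
  rcases Nat.eq_zero_or_pos d with rfl | hd
  · simp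
  have e1 : d * (m / d) + m % d = m := Nat.div_add_mod m d
  have e2 : d * (k / d) + k % d = k := Nat.div_add_mod k d
  have hq : k / d ≤ m / d := Nat.div_le_div_right hk
  have hql : d * (k / d) ≤ d * (m / d) := Nat.mul_le_mul_left d hq
  have hrw : m - k = d * (m / d - k / d) + (m % d - k % d) := by
    rw [Nat.mul_sub]; omega
  rw [hrw, Nat.mul_add_mod, Nat.mod_eq_of_lt (by have := Nat.mod_lt m hd; omega)]

private lemma aux_pred_mod {d n : ℕ} (hd : 0 < d) (hdvd : d ∣ n) (hn : 0 < n) :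
    (n - 1) % d = d - 1 := by
  obtain ⟨c, rfl⟩ := hdvd
  rcases Nat.eq_zero_or_pos c with rfl | hc
  · simp at hn
  have hd1 : d ≤ d * c := Nat.le_mul_of_pos_right d hc
  have hrw : d * c - 1 = d * (c - 1) + (d - 1) := by rw [Nat.mul_sub]; omega
  rw [hrw, Nat.mul_add_mod, Nat.mod_eq_of_lt (by omega)]

private lemma aux_pred_mod' {d n : ℕ} (h : 0 < n % d) : (n - 1) % d = n % d - 1 := by
  rcases Nat.eq_zero_or_pos d with rfl | hd
  · simp
  have h1 : d * (n / d) + n % d = n := Nat.div_add_mod n d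
  have hrw : n - 1 = d * (n / d) + (n % d - 1) := by omega
  rw [hrw, Nat.mul_add_mod, Nat.mod_eq_of_lt (by have := Nat.mod_lt n hd; omega)]

private lemma aux_low (r n : ℕ) (hr : r.Prime) (hn : 0 < n) :
    n % r ^ (padicValNat r n + 1) = n / r ^ padicValNat r n % r * r ^ padicValNat r n
    ∧ 1 ≤ n / r ^ padicValNat r n % r ∧ n / r ^ padicValNat r n % r < r := by
  haveI := Fact.mk hr
  obtain ⟨m, hm⟩ := pow_padicValNat_dvd (p := r) (n := n)
  set t := padicValNat r n with ht
  have hdiv : n / r ^ t = m := by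
    rw [hm, Nat.mul_div_cancel_left _ (pow_pos hr.pos t)]
  refine ⟨?_, ?_, Nat.mod_lt _ hr.pos⟩
  · conv_rhs => rw [hdiv]
    rw [pow_succ, hm, Nat.mul_mod_mul_left, mul_comm]
  · rw [hdiv]
    rcases Nat.eq_zero_or_pos (m % r) with h0 | h1
    · exfalso
      have hdvd : r ^ (t + 1) ∣ n := by
        obtain ⟨c, hc⟩ := Nat.dvd_of_mod_eq_zero h0
        exact ⟨c, by rw [hm, hc, pow_succ]; ring⟩
      exact pow_succ_padicValNat_not_dvd hn.ne' hdvd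
    · exact h1

theorem stmt_11 (p q : ℕ) (hp : p.Prime) (hq : q.Prime) (hpq : p ≠ q)
    (n : ℕ) (hn : 0 < n) (hpn : p ∣ n) (hqn : q ∣ n)
    (t a A s b B : ℕ)
    (ht : t = padicValNat q n) (ha : a = (n / q ^ t) % q) (hA : A = a * q ^ t)
    (hs : s = padicValNat p n) (hb : b = (n / p ^ s) % p) (hB : B = b * p ^ s)
    (hAB : A < B) :
    q ∣ Nat.choose (n - 1) A ∧ ¬ p ∣ Nat.choose (n - 1) A := by
  haveI := Fact.mk hp; haveI := Fact.mk hq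
  subst hA; subst hB; subst ha; subst hb; subst ht; subst hs
  obtain ⟨hAeq, ha1, haq⟩ := aux_low q n hq hn
  obtain ⟨hBeq, hb1, hbp⟩ := aux_low p n hp hn
  set t := padicValNat q n with ht
  set s := padicValNat p n with hs
  set a := n / q ^ t % q with ha
  set b := n / p ^ s % p with hb
  set A := a * q ^ t with hA
  set B := b * p ^ s with hB
  have hqpos := hq.pos
  have hppos := hp.pos
  have hA1 : 1 ≤ A := Nat.mul_pos ha1 (pow_pos hqpos t)
  have hBn : B ≤ n := hBeq ▸ Nat.mod_le n _
  have hAn : A < n := lt_of_lt_of_le hAB hBn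
  set N := n - 1 with hN
  have hkN : A ≤ N := by omega
  have hAltq : A < q ^ (t + 1) := by
    have h1 : a * q ^ t < q * q ^ t :=
      Nat.mul_lt_mul_of_lt_of_le haq le_rfl (pow_pos hqpos t)
    calc A = a * q ^ t := rfl
      _ < q * q ^ t := h1
      _ = q ^ (t + 1) := by rw [pow_succ, mul_comm]
  have hBltp : B < p ^ (s + 1) := by
    have h1 : b * p ^ s < p * p ^ s :=
      Nat.mul_lt_mul_of_lt_of_le hbp le_rfl (pow_pos hppos s)
    calc B = b * p ^ s := rfl
      _ < p * p ^ s := h1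
      _ = p ^ (s + 1) := by rw [pow_succ, mul_comm]
  constructor
  · -- q ∣ choose N A
    have hbd : Nat.log q N < max (Nat.log q N + 1) (t + 2) :=
      lt_of_lt_of_le (Nat.lt_succ_self _) (le_max_left _ _)
    have hval := padicValNat_choose (p := q) hkN hbd
    have hpos : 0 < padicValNat q (Nat.choose N A) := by
      rw [hval]
      apply Finset.card_pos.mpr
      refine ⟨t + 1, Finset.mem_filter.mpr ⟨Finset.mem_Ico.mpr ⟨by omega, ?_⟩, ?_⟩⟩
      · exact lt_of_lt_of_le (by omega) (le_max_right _ _)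
      · have e1 : A % q ^ (t + 1) = A := Nat.mod_eq_of_lt hAltq
        have e2 : (N - A) % q ^ (t + 1) = q ^ (t + 1) - 1 := by
          have hdvd : q ^ (t + 1) ∣ n - A := by
            have h := Nat.dvd_sub_mod (n := q ^ (t + 1)) n
            rwa [hAeq] at h
          have hNA : N - A = n - A - 1 := by omega
          rw [hNA]
          exact aux_pred_mod (pow_pos hqpos _) hdvd (by omega)
        rw [e1, e2]
        have := pow_pos hqpos (t + 1)
        omega
    exact dvd_trans (dvd_pow_self q hpos.ne') pow_padicValNat_dvd
  · -- p ∤ choose N A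
    intro hdvd
    have hval2 := padicValNat_choose (p := p) hkN (Nat.lt_succ_self (Nat.log p N))
    have hempty : padicValNat p (Nat.choose N A) = 0 := by
      rw [hval2, Finset.card_eq_zero, Finset.filter_eq_empty_iff]
      intro i hi
      simp only [not_le]
      have hi1 : 1 ≤ i := (Finset.mem_Ico.mp hi).1
      have hpi : 0 < p ^ i := pow_pos hppos i
      have key : A % p ^ i ≤ N % p ^ i := by
        by_cases hcase : i ≤ s
        · have hdvdn : p ^ i ∣ n := dvd_trans (pow_dvd_pow p hcase) pow_padicValNat_dvd
          have hNe : N % p ^ i = p ^ i - 1 := aux_pred_mod hpi hdvdn hn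
          have := Nat.mod_lt A hpi
          omega
        · push_neg at hcase
          have hple : p ^ (s + 1) ∣ p ^ i := pow_dvd_pow p (by omega)
          have hmm : n % p ^ i % p ^ (s + 1) = B := by
            rw [Nat.mod_mod_of_dvd n hple, hBeq]
          have hBpos : 0 < B := by omega
          have hge : B ≤ n % p ^ i := hmm ▸ Nat.mod_le _ _
          have hpos : 0 < n % p ^ i := by omega
          have hNpi : N % p ^ i = n % p ^ i - 1 := aux_pred_mod' hpos
          have hAsm : A % p ^ i = A := by
            apply Nat.mod_eq_of_lt
            calc A < p ^ (s + 1) := lt_trans hAB hBltp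
              _ ≤ p ^ i := Nat.pow_le_pow_right hppos (by omega)
          omega
      have hsub : (N - A) % p ^ i = N % p ^ i - A % p ^ i := aux_mod_sub_mod hkN key
      have := Nat.mod_lt N hpi
      omega
    have := one_le_padicValNat_of_dvd (Nat.choose_pos hkN).ne' hdvd
    omega
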